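/- If G is a P_6-free chordal graph, then its completion graph G_co is a split graph. -/

import Mathlib

set_option maxRecDepth 4000


open Set

variable {V : Type*}

/-- The closed neighbourhood `N_G[x]` of a vertex. -/
def closedNbhd (G : SimpleGraph V) (x : V) : Set V := insert x (G.neighborSet x)

/-- The closed neighbourhood `N_G[A]` of a set of vertices. -/
def closedNbhdSet (G : SimpleGraph V) (A : Set V) : Set V := ⋃ x ∈ A, closedNbhd G x

/-- `D` is a dominating set of `G`. -/
def Dominates (G : SimpleGraph V) (D : Set V) : Prop := ∀ v, v ∈ closedNbhdSet G D

/-- `IR` is a valid set of irredundant vertices of `G`: every member has an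
inclusion-minimal closed neighbourhood, exactly one representative is kept per class of
vertices with equal closed neighbourhoods, and every vertex with a minimal closed
neighbourhood has a representative in `IR`. The remaining (redundant) vertices form
`IRᶜ = RN(G)`. -/
def IsIrrSet (G : SimpleGraph V) (IR : Set V) : Prop :=
  (∀ x ∈ IR, ∀ y : V, closedNbhd G y ⊆ closedNbhd G x → closedNbhd G y = closedNbhd G x) ∧
  (∀ x ∈ IR, ∀ y ∈ IR, closedNbhd G x = closedNbhd G y → x = y) ∧
  (∀ x : V, (∀ y : V, closedNbhd G y ⊆ closedNbhd G x → closedNbhd G y = closedNbhd G x) →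
    ∃ z ∈ IR, closedNbhd G z = closedNbhd G x)

/-- The completion `G_co` of `G` (w.r.t. the irredundant set `IR`): all edges between
distinct redundant vertices are added. -/
def completion (G : SimpleGraph V) (IR : Set V) : SimpleGraph V where
  Adj x y := G.Adj x y ∨ (x ≠ y ∧ x ∉ IR ∧ y ∉ IR)
  symm := by
    refine ⟨?_⟩
    intro x y h
    rcases h with h | ⟨hne, hx, hy⟩
    · exact Or.inl h.symm
    · exact Or.inr ⟨hne.symm, hy, hx⟩
  loopless := by
    refine ⟨?_⟩
    intro x h
    rcases h with h | ⟨hne, _, _⟩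
    · exact G.irrefl h
    · exact hne rfl

/-- A graph is chordal if it has no induced cycle of length at least 4. -/
def Chordal (G : SimpleGraph V) : Prop :=
  ∀ n : ℕ, 4 ≤ n → IsEmpty (SimpleGraph.cycleGraph n ↪g G)

/-- A graph is `P₆`-free if it has no induced path on 6 vertices. -/
def P6Free (G : SimpleGraph V) : Prop := IsEmpty (SimpleGraph.pathGraph 6 ↪g G)

/-- A graph is a split graph if its vertex set partitions into a clique and an
independent set. -/
def IsSplit (G : SimpleGraph V) : Prop :=
  ∃ C S : Set V, C ∪ S = Set.univ ∧ C ∩ S = ∅ ∧ G.IsClique C ∧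
    S.Pairwise fun a b => ¬ G.Adj a b

lemma mem_closedNbhd' {G : SimpleGraph V} {x z : V} :
    z ∈ closedNbhd G x ↔ z = x ∨ G.Adj x z := by
  simp [closedNbhd]

lemma no_c4 {G : SimpleGraph V} (hch : Chordal G)
    {v0 v1 v2 v3 : V}
    (h01 : G.Adj v0 v1) (h12 : G.Adj v1 v2) (h23 : G.Adj v2 v3) (h30 : G.Adj v3 v0)
    (h02 : ¬ G.Adj v0 v2) (h13 : ¬ G.Adj v1 v3) (n02 : v0 ≠ v2) (n13 : v1 ≠ v3) : False := by
  have h10 := h01.symm; have h21 := h12.symm; have h32 := h23.symm; have h03 := h30.symm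
  have h20 : ¬ G.Adj v2 v0 := fun h => h02 h.symm
  have h31 : ¬ G.Adj v3 v1 := fun h => h13 h.symm
  have l0 := (G.irrefl : ¬ G.Adj v0 v0); have l1 := (G.irrefl : ¬ G.Adj v1 v1)
  have l2 := (G.irrefl : ¬ G.Adj v2 v2); have l3 := (G.irrefl : ¬ G.Adj v3 v3)
  have n01 := h01.ne; have n12 := h12.ne; have n23 := h23.ne; have n30 := h30.ne
  refine (hch 4 le_rfl).elim ⟨⟨![v0,v1,v2,v3], ?_⟩, ?_⟩
  · intro i j h
    fin_cases i <;> fin_cases j <;>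
      simp only [Fin.isValue, Matrix.cons_val_zero, Matrix.cons_val_one, Matrix.head_cons,
        Matrix.cons_val_two, Matrix.tail_cons, Matrix.cons_val_three, Matrix.cons_val_four,
        Matrix.cons_val_succ] at h <;>
      first
        | rfl
        | exact absurd h (by assumption)
        | exact absurd h.symm (by assumption)
  · intro i j
    fin_cases i <;> fin_cases j <;>
      simp only [Fin.isValue, Matrix.cons_val_zero, Matrix.cons_val_one, Matrix.head_cons,
        Matrix.cons_val_two, Matrix.tail_cons, Matrix.cons_val_three, Matrix.cons_val_four,
        Matrix.cons_val_succ] <;>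
      first
        | exact iff_of_true (by assumption) (by rw [SimpleGraph.cycleGraph_adj']; decide)
        | exact iff_of_false (by assumption) (by rw [SimpleGraph.cycleGraph_adj']; decide)

lemma no_c5 {G : SimpleGraph V} (hch : Chordal G)
    {v0 v1 v2 v3 v4 : V}
    (h01 : G.Adj v0 v1) (h12 : G.Adj v1 v2) (h23 : G.Adj v2 v3) (h34 : G.Adj v3 v4)
    (h40 : G.Adj v4 v0)
    (h02 : ¬ G.Adj v0 v2) (h03 : ¬ G.Adj v0 v3) (h13 : ¬ G.Adj v1 v3)
    (h14 : ¬ G.Adj v1 v4) (h24 : ¬ G.Adj v2 v4)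
    (n02 : v0 ≠ v2) (n03 : v0 ≠ v3) (n13 : v1 ≠ v3) (n14 : v1 ≠ v4) (n24 : v2 ≠ v4) :
    False := by
  have h10 := h01.symm; have h21 := h12.symm; have h32 := h23.symm; have h43 := h34.symm
  have h04 := h40.symm
  have h20 : ¬ G.Adj v2 v0 := fun h => h02 h.symm
  have h30 : ¬ G.Adj v3 v0 := fun h => h03 h.symm
  have h31 : ¬ G.Adj v3 v1 := fun h => h13 h.symm
  have h41 : ¬ G.Adj v4 v1 := fun h => h14 h.symm
  have h42 : ¬ G.Adj v4 v2 := fun h => h24 h.symm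
  have l0 := (G.irrefl : ¬ G.Adj v0 v0); have l1 := (G.irrefl : ¬ G.Adj v1 v1); have l2 := (G.irrefl : ¬ G.Adj v2 v2)
  have l3 := (G.irrefl : ¬ G.Adj v3 v3); have l4 := (G.irrefl : ¬ G.Adj v4 v4)
  have n01 := h01.ne; have n12 := h12.ne; have n23 := h23.ne; have n34 := h34.ne
  have n40 := h40.ne
  refine (hch 5 (by norm_num)).elim ⟨⟨![v0,v1,v2,v3,v4], ?_⟩, ?_⟩
  · intro i j h
    fin_cases i <;> fin_cases j <;>
      simp only [Fin.isValue, Matrix.cons_val_zero, Matrix.cons_val_one, Matrix.head_cons,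
        Matrix.cons_val_two, Matrix.tail_cons, Matrix.cons_val_three, Matrix.cons_val_four,
        Matrix.cons_val_succ] at h <;>
      first
        | rfl
        | exact absurd h (by assumption)
        | exact absurd h.symm (by assumption)
  · intro i j
    fin_cases i <;> fin_cases j <;>
      simp only [Fin.isValue, Matrix.cons_val_zero, Matrix.cons_val_one, Matrix.head_cons,
        Matrix.cons_val_two, Matrix.tail_cons, Matrix.cons_val_three, Matrix.cons_val_four,
        Matrix.cons_val_succ] <;>
      first
        | exact iff_of_true (by assumption) (by rw [SimpleGraph.cycleGraph_adj']; decide)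
        | exact iff_of_false (by assumption) (by rw [SimpleGraph.cycleGraph_adj']; decide)

set_option maxHeartbeats 1000000 in
lemma no_c6 {G : SimpleGraph V} (hch : Chordal G)
    {v0 v1 v2 v3 v4 v5 : V}
    (h01 : G.Adj v0 v1) (h12 : G.Adj v1 v2) (h23 : G.Adj v2 v3) (h34 : G.Adj v3 v4)
    (h45 : G.Adj v4 v5) (h50 : G.Adj v5 v0)
    (h02 : ¬ G.Adj v0 v2) (h03 : ¬ G.Adj v0 v3) (h04 : ¬ G.Adj v0 v4)
    (h13 : ¬ G.Adj v1 v3) (h14 : ¬ G.Adj v1 v4) (h15 : ¬ G.Adj v1 v5)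
    (h24 : ¬ G.Adj v2 v4) (h25 : ¬ G.Adj v2 v5) (h35 : ¬ G.Adj v3 v5)
    (n02 : v0 ≠ v2) (n03 : v0 ≠ v3) (n04 : v0 ≠ v4) (n13 : v1 ≠ v3) (n14 : v1 ≠ v4)
    (n15 : v1 ≠ v5) (n24 : v2 ≠ v4) (n25 : v2 ≠ v5) (n35 : v3 ≠ v5) :
    False := by
  have h10 := h01.symm; have h21 := h12.symm; have h32 := h23.symm; have h43 := h34.symm
  have h54 := h45.symm; have h05 := h50.symm
  have h20 : ¬ G.Adj v2 v0 := fun h => h02 h.symm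
  have h30 : ¬ G.Adj v3 v0 := fun h => h03 h.symm
  have h40 : ¬ G.Adj v4 v0 := fun h => h04 h.symm
  have h31 : ¬ G.Adj v3 v1 := fun h => h13 h.symm
  have h41 : ¬ G.Adj v4 v1 := fun h => h14 h.symm
  have h51 : ¬ G.Adj v5 v1 := fun h => h15 h.symm
  have h42 : ¬ G.Adj v4 v2 := fun h => h24 h.symm
  have h52 : ¬ G.Adj v5 v2 := fun h => h25 h.symm
  have h53 : ¬ G.Adj v5 v3 := fun h => h35 h.symm
  have l0 := (G.irrefl : ¬ G.Adj v0 v0); have l1 := (G.irrefl : ¬ G.Adj v1 v1); have l2 := (G.irrefl : ¬ G.Adj v2 v2)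
  have l3 := (G.irrefl : ¬ G.Adj v3 v3); have l4 := (G.irrefl : ¬ G.Adj v4 v4); have l5 := (G.irrefl : ¬ G.Adj v5 v5)
  have n01 := h01.ne; have n12 := h12.ne; have n23 := h23.ne; have n34 := h34.ne
  have n45 := h45.ne; have n50 := h50.ne
  refine (hch 6 (by norm_num)).elim ⟨⟨![v0,v1,v2,v3,v4,v5], ?_⟩, ?_⟩
  · intro i j h
    fin_cases i <;> fin_cases j <;>
      simp only [Fin.isValue, Matrix.cons_val_zero, Matrix.cons_val_one, Matrix.head_cons,
        Matrix.cons_val_two, Matrix.tail_cons, Matrix.cons_val_three, Matrix.cons_val_four,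
        Matrix.cons_val_succ] at h <;>
      first
        | rfl
        | exact absurd h (by assumption)
        | exact absurd h.symm (by assumption)
  · intro i j
    fin_cases i <;> fin_cases j <;>
      simp only [Fin.isValue, Matrix.cons_val_zero, Matrix.cons_val_one, Matrix.head_cons,
        Matrix.cons_val_two, Matrix.tail_cons, Matrix.cons_val_three, Matrix.cons_val_four,
        Matrix.cons_val_succ] <;>
      first
        | exact iff_of_true (by assumption) (by rw [SimpleGraph.cycleGraph_adj']; decide)
        | exact iff_of_false (by assumption) (by rw [SimpleGraph.cycleGraph_adj']; decide)

set_option maxHeartbeats 1000000 in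
lemma no_p6 {G : SimpleGraph V} (hp6 : P6Free G)
    {v0 v1 v2 v3 v4 v5 : V}
    (h01 : G.Adj v0 v1) (h12 : G.Adj v1 v2) (h23 : G.Adj v2 v3) (h34 : G.Adj v3 v4)
    (h45 : G.Adj v4 v5)
    (h02 : ¬ G.Adj v0 v2) (h03 : ¬ G.Adj v0 v3) (h04 : ¬ G.Adj v0 v4) (h05 : ¬ G.Adj v0 v5)
    (h13 : ¬ G.Adj v1 v3) (h14 : ¬ G.Adj v1 v4) (h15 : ¬ G.Adj v1 v5)
    (h24 : ¬ G.Adj v2 v4) (h25 : ¬ G.Adj v2 v5) (h35 : ¬ G.Adj v3 v5)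
    (n02 : v0 ≠ v2) (n03 : v0 ≠ v3) (n04 : v0 ≠ v4) (n05 : v0 ≠ v5)
    (n13 : v1 ≠ v3) (n14 : v1 ≠ v4) (n15 : v1 ≠ v5)
    (n24 : v2 ≠ v4) (n25 : v2 ≠ v5) (n35 : v3 ≠ v5) :
    False := by
  have h10 := h01.symm; have h21 := h12.symm; have h32 := h23.symm; have h43 := h34.symm
  have h54 := h45.symm
  have h20 : ¬ G.Adj v2 v0 := fun h => h02 h.symm
  have h30 : ¬ G.Adj v3 v0 := fun h => h03 h.symm
  have h40 : ¬ G.Adj v4 v0 := fun h => h04 h.symm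
  have h50 : ¬ G.Adj v5 v0 := fun h => h05 h.symm
  have h31 : ¬ G.Adj v3 v1 := fun h => h13 h.symm
  have h41 : ¬ G.Adj v4 v1 := fun h => h14 h.symm
  have h51 : ¬ G.Adj v5 v1 := fun h => h15 h.symm
  have h42 : ¬ G.Adj v4 v2 := fun h => h24 h.symm
  have h52 : ¬ G.Adj v5 v2 := fun h => h25 h.symm
  have h53 : ¬ G.Adj v5 v3 := fun h => h35 h.symm
  have l0 := (G.irrefl : ¬ G.Adj v0 v0); have l1 := (G.irrefl : ¬ G.Adj v1 v1); have l2 := (G.irrefl : ¬ G.Adj v2 v2)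
  have l3 := (G.irrefl : ¬ G.Adj v3 v3); have l4 := (G.irrefl : ¬ G.Adj v4 v4); have l5 := (G.irrefl : ¬ G.Adj v5 v5)
  have n01 := h01.ne; have n12 := h12.ne; have n23 := h23.ne; have n34 := h34.ne
  have n45 := h45.ne
  refine hp6.elim ⟨⟨![v0,v1,v2,v3,v4,v5], ?_⟩, ?_⟩
  · intro i j h
    fin_cases i <;> fin_cases j <;>
      simp only [Fin.isValue, Matrix.cons_val_zero, Matrix.cons_val_one, Matrix.head_cons,
        Matrix.cons_val_two, Matrix.tail_cons, Matrix.cons_val_three, Matrix.cons_val_four,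
        Matrix.cons_val_succ] at h <;>
      first
        | rfl
        | exact absurd h (by assumption)
        | exact absurd h.symm (by assumption)
  · intro i j
    fin_cases i <;> fin_cases j <;>
      simp only [Fin.isValue, Matrix.cons_val_zero, Matrix.cons_val_one, Matrix.head_cons,
        Matrix.cons_val_two, Matrix.tail_cons, Matrix.cons_val_three, Matrix.cons_val_four,
        Matrix.cons_val_succ] <;>
      first
        | exact iff_of_true (by assumption) (by rw [SimpleGraph.pathGraph_adj]; decide)
        | exact iff_of_false (by assumption) (by rw [SimpleGraph.pathGraph_adj]; decide)

/-- In a `P₆`-free chordal graph, the irredundant set is independent. -/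
lemma IR_indep {G : SimpleGraph V} (hch : Chordal G) (hp6 : P6Free G)
    {IR : Set V} (hIR : IsIrrSet G IR) {x y : V} (hx : x ∈ IR) (hy : y ∈ IR)
    (hne : x ≠ y) : ¬ G.Adj x y := by
  intro hadj
  obtain ⟨hmin, huniq, -⟩ := hIR
  have hNne : closedNbhd G x ≠ closedNbhd G y := fun h => hne (huniq x hx y hy h)
  obtain ⟨a, haX, haY⟩ := not_subset.mp
    (fun h : closedNbhd G x ⊆ closedNbhd G y => hNne (hmin y hy x h))
  obtain ⟨b, hbY, hbX⟩ := not_subset.mp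
    (fun h : closedNbhd G y ⊆ closedNbhd G x => hNne (hmin x hx y h).symm)
  rw [mem_closedNbhd'] at haX hbY
  have hyNx : y ∈ closedNbhd G x := mem_closedNbhd'.mpr (Or.inr hadj)
  have hxNy : x ∈ closedNbhd G y := mem_closedNbhd'.mpr (Or.inr hadj.symm)
  have hay : a ≠ y := fun h => haY (mem_closedNbhd'.mpr (Or.inl h))
  have hya : ¬ G.Adj y a := fun h => haY (mem_closedNbhd'.mpr (Or.inr h))
  have hax : a ≠ x := fun h => haY (h.symm ▸ hxNy)
  have hxa : G.Adj x a := haX.resolve_left hax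
  have hbx : b ≠ x := fun h => hbX (mem_closedNbhd'.mpr (Or.inl h))
  have hxb : ¬ G.Adj x b := fun h => hbX (mem_closedNbhd'.mpr (Or.inr h))
  have hby : b ≠ y := fun h => hbX (h.symm ▸ hyNx)
  have hyb : G.Adj y b := hbY.resolve_left hby
  have hab : ¬ G.Adj a b := fun h =>
    no_c4 hch hxa.symm hadj hyb h.symm (fun h' => hya h'.symm) hxb hay (Ne.symm hbx)
  have hanb : a ≠ b := fun h => haY (mem_closedNbhd'.mpr (h.symm ▸ hbY))
  -- get a' ∈ N[a] \ N[x], not adjacent to y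
  have hNaNx : ¬ closedNbhd G a ⊆ closedNbhd G x := by
    intro h
    have heq := hmin x hx a h
    have hyNa : y ∈ closedNbhd G a := heq ▸ hyNx
    rcases mem_closedNbhd'.mp hyNa with h' | h'
    · exact hay h'.symm
    · exact hya h'.symm
  obtain ⟨a', ha'A, ha'X⟩ := not_subset.mp hNaNx
  have haNx : a ∈ closedNbhd G x := mem_closedNbhd'.mpr (Or.inr hxa)
  have ha'x : a' ≠ x := fun h => ha'X (mem_closedNbhd'.mpr (Or.inl h))
  have hxa' : ¬ G.Adj x a' := fun h => ha'X (mem_closedNbhd'.mpr (Or.inr h))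
  have ha'a : a' ≠ a := fun h => ha'X (h.symm ▸ haNx)
  have haa' : G.Adj a a' := (mem_closedNbhd'.mp ha'A).resolve_left ha'a
  have hya' : ¬ G.Adj y a' := fun h =>
    no_c4 hch haa'.symm hxa.symm hadj h (fun h' => hxa' h'.symm)
      (fun h' => hya h'.symm) ha'x hay
  have ha'y : a' ≠ y := fun h => ha'X (h.symm ▸ hyNx)
  -- get b' ∈ N[b] \ N[y], not adjacent to x
  have hNbNy : ¬ closedNbhd G b ⊆ closedNbhd G y := by
    intro h
    have heq := hmin y hy b h
    have hxNb : x ∈ closedNbhd G b := heq ▸ hxNy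
    rcases mem_closedNbhd'.mp hxNb with h' | h'
    · exact hbx h'.symm
    · exact hxb h'.symm
  obtain ⟨b', hb'B, hb'Y⟩ := not_subset.mp hNbNy
  have hbNy : b ∈ closedNbhd G y := mem_closedNbhd'.mpr (Or.inr hyb)
  have hb'y : b' ≠ y := fun h => hb'Y (mem_closedNbhd'.mpr (Or.inl h))
  have hyb' : ¬ G.Adj y b' := fun h => hb'Y (mem_closedNbhd'.mpr (Or.inr h))
  have hb'b : b' ≠ b := fun h => hb'Y (h.symm ▸ hbNy)
  have hbb' : G.Adj b b' := (mem_closedNbhd'.mp hb'B).resolve_left hb'b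
  have hxb' : ¬ G.Adj x b' := fun h =>
    no_c4 hch hbb'.symm hyb.symm hadj.symm h (fun h' => hyb' h'.symm)
      (fun h' => hxb h'.symm) hb'y hbx
  have hb'x : b' ≠ x := fun h => hb'Y (h.symm ▸ hxNy)
  -- extra non-adjacencies via C5
  have hab' : ¬ G.Adj a b' := fun h =>
    no_c5 hch hxa.symm hadj hyb hbb' h.symm
      (fun h' => hya h'.symm) hab hxb hxb' hyb'
      hay hanb (Ne.symm hbx) (Ne.symm hb'x) (Ne.symm hb'y)
  have hba' : ¬ G.Adj b a' := fun h =>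
    no_c5 hch hyb.symm hadj.symm hxa haa' h.symm
      (fun h' => hxb h'.symm) (fun h' => hab h'.symm) hya hya' hxa'
      hbx (Ne.symm hanb) (Ne.symm hay) (Ne.symm ha'y) (Ne.symm ha'x)
  have ha'b : a' ≠ b := fun h =>
    hab ((mem_closedNbhd'.mp (h ▸ ha'A)).resolve_left (fun h' => hanb h'.symm))
  have hb'a : b' ≠ a := fun h =>
    hab ((mem_closedNbhd'.mp (h ▸ hb'B)).resolve_left hanb).symm
  have ha'b' : a' ≠ b' := fun h =>
    no_c5 hch haa'.symm hxa.symm hadj hyb (h.symm ▸ hbb')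
      (fun h' => hxa' h'.symm) (fun h' => hya' h'.symm) (fun h' => hya h'.symm) hab hxb
      ha'x ha'y hay hanb (Ne.symm hbx)
  have ha'nb' : ¬ G.Adj a' b' := fun h =>
    no_c6 hch haa'.symm hxa.symm hadj hyb hbb' h.symm
      (fun h' => hxa' h'.symm) (fun h' => hya' h'.symm) (fun h' => hba' h'.symm)
      (fun h' => hya h'.symm) hab hab' hxb hxb' hyb'
      ha'x ha'y ha'b hay hanb (Ne.symm hb'a) (Ne.symm hbx) (Ne.symm hb'x) (Ne.symm hb'y)
  exact no_p6 hp6 haa'.symm hxa.symm hadj hyb hbb'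
    (fun h' => hxa' h'.symm) (fun h' => hya' h'.symm) (fun h' => hba' h'.symm) ha'nb'
    (fun h' => hya h'.symm) hab hab' hxb hxb' hyb'
    ha'x ha'y ha'b ha'b' hay hanb (Ne.symm hb'a) (Ne.symm hbx) (Ne.symm hb'x) (Ne.symm hb'y)

/-- The completion of a `P₆`-free chordal graph is a split graph. -/
theorem stmt_16 [Fintype V] (G : SimpleGraph V) (hch : Chordal G) (hp6 : P6Free G)
    (IR : Set V) (hIR : IsIrrSet G IR) :
    IsSplit (completion G IR) := by
  refine ⟨IRᶜ, IR, compl_union_self IR, compl_inter_self IR, ?_, ?_⟩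
  · intro u hu v hv huv
    exact Or.inr ⟨huv, hu, hv⟩
  · intro u hu v hv huv hadj
    rcases hadj with h | ⟨_, hnu, _⟩
    · exact IR_indep hch hp6 hIR hu hv huv h
    · exact hnu hu
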